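/- Let a > 0, b ≥ 0 and c ∈ ℝ with b + c < −1. Then there is a constant C = C(a,b,c) such that for all t ≥ r > 0, ∫_0^{t−r} λ^b ⟨λ⟩^c (t−r−λ)^{a−1} dλ ≤ C (t−r)^{a+b} ⟨t−r⟩^{−b−1}, where ⟨λ⟩ = 1+|λ|. -/

import Mathlib

open MeasureTheory

open Set Filter

lemma aux_intOn (b c : ℝ) (hb : 0 ≤ b) (hbc : b + c < -1) :
    IntegrableOn (fun x : ℝ => x ^ b * (1 + x) ^ c) (Set.Ioi 0) := by
  have hmeas : AEStronglyMeasurable (fun x : ℝ => x ^ b * (1 + x) ^ c) (volume.restrict (Set.Ioi (0:ℝ))) := by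
    have hcont : ContinuousOn (fun x : ℝ => x ^ b * (1 + x) ^ c) (Set.Ioi 0) := by
      apply ContinuousOn.mul
      · exact continuousOn_id.rpow_const (fun x hx => Or.inl (ne_of_gt hx))
      · exact (continuousOn_const.add continuousOn_id).rpow_const
          (fun x hx => Or.inl (by have : (0:ℝ) < x := hx; show (1:ℝ) + x ≠ 0; positivity))
    exact hcont.aestronglyMeasurable measurableSet_Ioi
  rw [← Set.Ioc_union_Ioi_eq_Ioi (zero_le_one)]
  apply IntegrableOn.union
  · -- on Ioc 0 1, dominate by x ^ b
    have hg : IntegrableOn (fun x : ℝ => x ^ b) (Set.Ioc (0:ℝ) 1) := by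
      have := intervalIntegral.intervalIntegrable_rpow' (a := 0) (b := 1) (show -1 < b by linarith)
      rwa [intervalIntegrable_iff_integrableOn_Ioc_of_le zero_le_one] at this
    refine Integrable.mono hg (hmeas.mono_set Set.Ioc_subset_Ioi_self) ?_
    refine (ae_restrict_iff' measurableSet_Ioc).2 (Filter.Eventually.of_forall fun x hx => ?_)
    have hx0 : 0 < x := hx.1
    have h1 : (1 + x) ^ c ≤ 1 :=
      Real.rpow_le_one_of_one_le_of_nonpos (by linarith) (by linarith)
    have h2 : (0:ℝ) ≤ x ^ b := Real.rpow_nonneg hx0.le b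
    rw [Real.norm_eq_abs, Real.norm_eq_abs, abs_of_nonneg (by positivity), abs_of_nonneg h2]
    nlinarith [Real.rpow_nonneg (show (0:ℝ) ≤ 1 + x by linarith) c]
  · -- on Ioi 1, dominate by x ^ (b + c)
    have hg : IntegrableOn (fun x : ℝ => x ^ (b + c)) (Set.Ioi (1:ℝ)) :=
      integrableOn_Ioi_rpow_of_lt hbc zero_lt_one
    refine Integrable.mono hg (hmeas.mono_set (Set.Ioi_subset_Ioi zero_le_one)) ?_
    refine (ae_restrict_iff' measurableSet_Ioi).2 (Filter.Eventually.of_forall fun x hx => ?_)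
    have hx1 : (1:ℝ) < x := hx
    have hx0 : (0:ℝ) < x := by linarith
    have h1 : (1 + x) ^ c ≤ x ^ c :=
      Real.rpow_le_rpow_of_nonpos hx0 (by linarith) (by linarith)
    rw [Real.norm_eq_abs, Real.norm_eq_abs, abs_of_nonneg (by positivity),
      abs_of_nonneg (Real.rpow_nonneg hx0.le _)]
    calc x ^ b * (1 + x) ^ c ≤ x ^ b * x ^ c :=
          mul_le_mul_of_nonneg_left h1 (Real.rpow_nonneg hx0.le b)
      _ = x ^ (b + c) := (Real.rpow_add hx0 b c).symm

lemma aux_int_rpow (p s : ℝ) (hp : -1 < p) (hs : 0 < s) :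
    ∫ x in Set.Ioc (0:ℝ) s, x ^ p = s ^ (p + 1) / (p + 1) := by
  rw [← intervalIntegral.integral_of_le hs.le,
    integral_rpow (Or.inl hp), Real.zero_rpow (by linarith), sub_zero]

lemma aux_int_sub_rpow (p s : ℝ) (hp : -1 < p) (hs : 0 < s) :
    ∫ x in Set.Ioc (0:ℝ) s, (s - x) ^ p = s ^ (p + 1) / (p + 1) := by
  rw [← intervalIntegral.integral_of_le hs.le,
    intervalIntegral.integral_comp_sub_left (fun x => x ^ p) s, sub_self, sub_zero,
    integral_rpow (Or.inl hp), Real.zero_rpow (by linarith), sub_zero]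

lemma aux_intOn_sub_rpow (p s : ℝ) (hp : -1 < p) (hs : 0 < s) :
    IntegrableOn (fun x : ℝ => (s - x) ^ p) (Set.Ioc 0 s) := by
  have := (intervalIntegral.intervalIntegrable_rpow' (a := 0) (b := s) hp).comp_sub_left s
  rw [sub_self, sub_zero] at this; replace this := this.symm
  rwa [intervalIntegrable_iff_integrableOn_Ioc_of_le hs.le] at this

lemma aux_two_rpow (b : ℝ) : (2:ℝ) ^ (b+1) * (2:ℝ) ^ (-b-1) = 1 := by
  rw [← Real.rpow_add (by norm_num : (0:ℝ) < 2), show b+1+(-b-1) = 0 by ring, Real.rpow_zero]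

lemma aux_bracket (b c s : ℝ) (hb : 0 ≤ b) (hbc : b + c < -1) (hs : 0 ≤ s) :
    (1 + s/2) ^ c ≤ 2 ^ (b+1) * (1+s) ^ (-b-1) := by
  have h1 : (1 + s/2 : ℝ) ^ c ≤ (1 + s/2) ^ (-b-1) :=
    Real.rpow_le_rpow_of_exponent_le (by linarith) (by linarith)
  have h2 : (1 + s/2 : ℝ) ^ (-b-1) ≤ ((1+s)/2) ^ (-b-1) :=
    Real.rpow_le_rpow_of_nonpos (by linarith) (by linarith) (by linarith)
  have h3 : ((1+s)/2 : ℝ) ^ (-b-1) = (1+s)^(-b-1) / 2^(-b-1) :=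
    Real.div_rpow (x := 1+s) (y := 2) (by linarith) (by norm_num) _
  have h4 : (1+s:ℝ)^(-b-1) / 2^(-b-1) = 2^(b+1) * (1+s)^(-b-1) := by
    rw [div_eq_iff (by positivity), mul_assoc, mul_comm ((1+s:ℝ)^(-b-1)), ← mul_assoc,
      aux_two_rpow, one_mul]
  linarith [h1.trans (h2.trans_eq (h3.trans h4))]

lemma aux_claimA (a b s Jp J1 : ℝ) (ha : 0 < a) (hb : 0 ≤ b) (hs : 0 < s)
    (hJ1 : 0 ≤ J1) (hJp : 0 ≤ Jp) (h1 : Jp ≤ s ^ (b+1) / (b+1)) (h2 : Jp ≤ J1) :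
    s^(a-1) * Jp ≤ (1/(b+1)+J1) * (2^(b+1) * (s^(a+b) * (1+s)^(-b-1))) := by
  have hP0 : (0:ℝ) ≤ s^(a-1) := Real.rpow_nonneg hs.le _
  have hR0 : (0:ℝ) ≤ s^(a+b) := Real.rpow_nonneg hs.le _
  have hU0 : (0:ℝ) ≤ (1+s)^(-b-1) := Real.rpow_nonneg (by linarith) _
  have hV0 : (0:ℝ) < (2:ℝ)^(b+1) := Real.rpow_pos_of_pos (by norm_num) _
  rcases le_total s 1 with hle | hle
  · -- small s
    have hPQ : s^(a-1) * s^(b+1) = s^(a+b) := by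
      rw [← Real.rpow_add hs]; ring_nf
    have e2 : (1:ℝ) ≤ 2^(b+1) * (1+s)^(-b-1) := by
      have : (2:ℝ)^(-b-1) ≤ (1+s)^(-b-1) :=
        Real.rpow_le_rpow_of_nonpos (by linarith) (by linarith) (by linarith)
      calc (1:ℝ) = 2^(b+1) * 2^(-b-1) := (aux_two_rpow b).symm
        _ ≤ 2^(b+1) * (1+s)^(-b-1) := by
            exact mul_le_mul_of_nonneg_left this hV0.le
    calc s^(a-1) * Jp ≤ s^(a-1) * (s^(b+1)/(b+1)) :=
          mul_le_mul_of_nonneg_left h1 hP0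
      _ = (1/(b+1)) * s^(a+b) := by rw [← hPQ]; ring
      _ ≤ (1/(b+1)) * (s^(a+b) * (2^(b+1) * (1+s)^(-b-1))) := by
          have := mul_le_mul_of_nonneg_left e2 hR0
          have hbp : (0:ℝ) ≤ 1/(b+1) := by positivity
          nlinarith
      _ ≤ (1/(b+1)+J1) * (2^(b+1) * (s^(a+b) * (1+s)^(-b-1))) := by
          have h0 : (0:ℝ) ≤ 2^(b+1) * (s^(a+b) * (1+s)^(-b-1)) := by positivity
          nlinarith
  · -- large s
    have hW0 : (0:ℝ) ≤ s^(-b-1) := Real.rpow_nonneg hs.le _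
    have hRW : s^(a+b) * s^(-b-1) = s^(a-1) := by
      rw [← Real.rpow_add hs]; ring_nf
    have e2 : s^(-b-1) ≤ 2^(b+1) * (1+s)^(-b-1) := by
      have hm : ((2:ℝ)*s)^(-b-1) = 2^(-b-1) * s^(-b-1) :=
        Real.mul_rpow (by norm_num) hs.le
      have : ((2:ℝ)*s)^(-b-1) ≤ (1+s)^(-b-1) :=
        Real.rpow_le_rpow_of_nonpos (by linarith) (by linarith) (by linarith)
      rw [hm] at this
      calc s^(-b-1) = 2^(b+1) * (2^(-b-1) * s^(-b-1)) := by
            rw [← mul_assoc, aux_two_rpow, one_mul]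
        _ ≤ 2^(b+1) * (1+s)^(-b-1) := mul_le_mul_of_nonneg_left this hV0.le
    calc s^(a-1) * Jp ≤ s^(a-1) * J1 := mul_le_mul_of_nonneg_left h2 hP0
      _ = (s^(a+b) * s^(-b-1)) * J1 := by rw [hRW]
      _ ≤ (s^(a+b) * (2^(b+1) * (1+s)^(-b-1))) * J1 := by
          have := mul_le_mul_of_nonneg_left e2 hR0
          nlinarith
      _ ≤ (1/(b+1)+J1) * (2^(b+1) * (s^(a+b) * (1+s)^(-b-1))) := by
          have h0 : (0:ℝ) ≤ 2^(b+1) * (s^(a+b) * (1+s)^(-b-1)) := by positivity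
          have hbp : (0:ℝ) < 1/(b+1) := by positivity
          nlinarith

set_option maxHeartbeats 1000000 in
/-- For a > 0, b ≥ 0, b + c < −1, there is C with
∫_0^{t−r} λ^b ⟨λ⟩^c (t−r−λ)^{a−1} dλ ≤ C (t−r)^{a+b} ⟨t−r⟩^{−b−1} for t ≥ r > 0. -/
theorem stmt_14 (a b c : ℝ) (ha : 0 < a) (hb : 0 ≤ b) (hbc : b + c < -1) :
    ∃ C : ℝ, 0 < C ∧ ∀ r t : ℝ, 0 < r → r ≤ t →
      (∫ lam in Set.Ioc (0 : ℝ) (t - r),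
          lam ^ b * (1 + |lam|) ^ c * (t - r - lam) ^ (a - 1)) ≤
        C * (t - r) ^ (a + b) * (1 + |t - r|) ^ (-b - 1) := by
  set K1 : ℝ := max 1 ((2:ℝ) ^ (1 - a)) with hK1def
  have hK1one : (1:ℝ) ≤ K1 := le_max_left _ _
  have hK1pos : (0:ℝ) < K1 := lt_of_lt_of_le one_pos hK1one
  set J : ℝ := ∫ x in Set.Ioi (0:ℝ), x ^ b * (1 + x) ^ c with hJdef
  have hJ0 : 0 ≤ J := setIntegral_nonneg measurableSet_Ioi fun x hx => by
    have : (0:ℝ) < x := hx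
    positivity
  refine ⟨2 ^ (b+1) * (K1 * (1/(b+1) + J) + 1/a), by positivity, fun r t hr hrt => ?_⟩
  set s : ℝ := t - r with hsdef
  have hs0 : 0 ≤ s := by simp [hsdef]; linarith
  rcases eq_or_lt_of_le hs0 with h | hs
  · rw [← h]
    simp [Real.zero_rpow (show a + b ≠ 0 by positivity)]
  have habs : |s| = s := abs_of_pos hs
  rw [habs]
  -- integrability facts
  have hint1 : IntegrableOn (fun lam : ℝ => lam^b * (1+lam)^c) (Set.Ioc 0 s) :=
    (aux_intOn b c hb hbc).mono_set Set.Ioc_subset_Ioi_self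
  have hint2 : IntegrableOn (fun lam : ℝ => (s-lam)^(a-1)) (Set.Ioc 0 s) :=
    aux_intOn_sub_rpow (a-1) s (by linarith) hs
  have hintb : IntegrableOn (fun lam : ℝ => lam ^ b) (Set.Ioc 0 s) := by
    have := intervalIntegral.intervalIntegrable_rpow' (a := 0) (b := s)
      (show -1 < b by linarith)
    rwa [intervalIntegrable_iff_integrableOn_Ioc_of_le hs.le] at this
  set g : ℝ → ℝ := fun lam =>
    K1 * s^(a-1) * (lam^b * (1+lam)^c) + ((1+s/2)^c * s^b) * (s-lam)^(a-1) with hgdef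
  have hgint : IntegrableOn g (Set.Ioc 0 s) :=
    (hint1.const_mul _).add (hint2.const_mul _)
  -- pointwise bound
  have hfg : ∀ lam ∈ Set.Ioc (0:ℝ) s,
      lam ^ b * (1 + |lam|) ^ c * (s - lam) ^ (a - 1) ≤ g lam := by
    intro lam hlam
    obtain ⟨hl0, hls⟩ := hlam
    rw [abs_of_pos hl0]
    have hb0 : (0:ℝ) ≤ lam ^ b := Real.rpow_nonneg hl0.le _
    have hc0 : (0:ℝ) ≤ (1+lam) ^ c := Real.rpow_nonneg (by linarith) _
    have hsl0 : (0:ℝ) ≤ (s - lam) ^ (a-1) := Real.rpow_nonneg (by linarith) _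
    rcases le_or_gt lam (s/2) with hhalf | hhalf
    · -- dominated by first term
      have key : (s - lam) ^ (a-1) ≤ K1 * s^(a-1) := by
        rcases le_total 1 a with h1a | h1a
        · calc (s - lam) ^ (a-1) ≤ s ^ (a-1) :=
              Real.rpow_le_rpow (by linarith) (by linarith) (by linarith)
            _ ≤ K1 * s^(a-1) := by
              nlinarith [Real.rpow_nonneg hs.le (a-1)]
        · calc (s - lam) ^ (a-1) ≤ (s/2) ^ (a-1) :=
              Real.rpow_le_rpow_of_nonpos (by linarith) (by linarith) (by linarith)
            _ = s^(a-1) * 2^(1-a) := by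
              rw [Real.div_rpow (x := s) (y := 2) hs.le (by norm_num) _,
                div_eq_mul_inv, ← Real.rpow_neg (by norm_num : (0:ℝ) ≤ 2),
                show -(a-1) = 1-a by ring]
            _ ≤ K1 * s^(a-1) := by
              have h2a : (2:ℝ)^(1-a) ≤ K1 := le_max_right _ _
              nlinarith [Real.rpow_nonneg hs.le (a-1)]
      have t2 : (0:ℝ) ≤ ((1+s/2)^c * s^b) * (s-lam)^(a-1) := by
        have : (0:ℝ) ≤ (1+s/2)^c := Real.rpow_nonneg (by linarith) _
        have : (0:ℝ) ≤ s^b := Real.rpow_nonneg hs.le _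
        positivity
      have := mul_le_mul_of_nonneg_left key (mul_nonneg hb0 hc0)
      simp only [hgdef]
      nlinarith
    · -- dominated by second term
      have k1 : lam ^ b ≤ s ^ b := Real.rpow_le_rpow hl0.le hls hb
      have k2 : (1+lam) ^ c ≤ (1+s/2) ^ c :=
        Real.rpow_le_rpow_of_nonpos (by linarith) (by linarith) (by linarith)
      have t1 : (0:ℝ) ≤ K1 * s^(a-1) * (lam^b * (1+lam)^c) := by
        have : (0:ℝ) ≤ s^(a-1) := Real.rpow_nonneg hs.le _
        positivity
      have key : lam ^ b * (1+lam) ^ c ≤ s ^ b * (1+s/2) ^ c := by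
        have hcs : (0:ℝ) ≤ (1+s/2)^c := Real.rpow_nonneg (by linarith) _
        nlinarith
      have := mul_le_mul_of_nonneg_right key hsl0
      simp only [hgdef]
      nlinarith
  -- step 1 : compare with g
  have step1 : (∫ lam in Set.Ioc (0:ℝ) s,
      lam ^ b * (1 + |lam|) ^ c * (s - lam) ^ (a - 1)) ≤ ∫ lam in Set.Ioc (0:ℝ) s, g lam := by
    refine integral_mono_of_nonneg ?_ hgint ?_
    · refine (ae_restrict_iff' measurableSet_Ioc).2 (Filter.Eventually.of_forall fun lam hlam => ?_)
      obtain ⟨hl0, hls⟩ := hlam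
      show (0:ℝ) ≤ lam ^ b * (1 + |lam|) ^ c * (s - lam) ^ (a - 1)
      rw [abs_of_pos hl0]
      have hb0 : (0:ℝ) ≤ lam ^ b := Real.rpow_nonneg hl0.le _
      have hc0 : (0:ℝ) ≤ (1+lam) ^ c := Real.rpow_nonneg (by linarith) _
      have hsl0 : (0:ℝ) ≤ (s - lam) ^ (a-1) := Real.rpow_nonneg (by linarith) _
      positivity
    · exact (ae_restrict_iff' measurableSet_Ioc).2 (Filter.Eventually.of_forall hfg)
  -- value of ∫ g
  have hsub : (∫ lam in Set.Ioc (0:ℝ) s, (s-lam)^(a-1)) = s^a / a := by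
    have := aux_int_sub_rpow (a-1) s (by linarith) hs
    rwa [sub_add_cancel] at this
  have hval : (∫ lam in Set.Ioc (0:ℝ) s, g lam) =
      K1 * s^(a-1) * (∫ lam in Set.Ioc (0:ℝ) s, lam^b * (1+lam)^c)
        + ((1+s/2)^c * s^b) * (s^a / a) := by
    simp only [hgdef]
    rw [integral_add (hint1.const_mul _) (hint2.const_mul _),
      integral_const_mul, integral_const_mul, hsub]
  -- bounds on the partial integral
  set Jp : ℝ := ∫ lam in Set.Ioc (0:ℝ) s, lam^b * (1+lam)^c with hJpdef
  have hJp0 : 0 ≤ Jp := setIntegral_nonneg measurableSet_Ioc fun x hx => by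
    have : (0:ℝ) < x := hx.1
    positivity
  have hJp1 : Jp ≤ s^(b+1)/(b+1) := by
    have hmono : Jp ≤ ∫ x in Set.Ioc (0:ℝ) s, x ^ b := by
      refine integral_mono_of_nonneg ?_ hintb ?_
      · refine (ae_restrict_iff' measurableSet_Ioc).2 (Filter.Eventually.of_forall fun x hx => ?_)
        have : (0:ℝ) < x := hx.1
        positivity
      · refine (ae_restrict_iff' measurableSet_Ioc).2 (Filter.Eventually.of_forall fun x hx => ?_)
        have hx0 : (0:ℝ) < x := hx.1
        have h1 : (1 + x) ^ c ≤ 1 :=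
          Real.rpow_le_one_of_one_le_of_nonpos (by linarith) (by linarith)
        show x ^ b * (1 + x) ^ c ≤ x ^ b
        nlinarith [Real.rpow_nonneg hx0.le b, Real.rpow_nonneg (show (0:ℝ) ≤ 1+x by linarith) c]
    calc Jp ≤ _ := hmono
      _ = s^(b+1)/(b+1) := aux_int_rpow b s (by linarith) hs
  have hJp2 : Jp ≤ J := by
    refine setIntegral_mono_set (aux_intOn b c hb hbc) ?_ ?_
    · refine (ae_restrict_iff' measurableSet_Ioi).2 (Filter.Eventually.of_forall fun x hx => ?_)
      have : (0:ℝ) < x := hx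
      positivity
    · exact HasSubset.Subset.eventuallyLE Set.Ioc_subset_Ioi_self
  -- final arithmetic
  have claimA := aux_claimA a b s Jp J ha hb hs hJ0 hJp0 hJp1 hJp2
  have claimB : ((1+s/2)^c * s^b) * (s^a / a) ≤
      (1/a) * (2^(b+1) * (s^(a+b) * (1+s)^(-b-1))) := by
    have hbr := aux_bracket b c s hb hbc hs.le
    have hsab : s^b * s^a = s^(a+b) := by rw [← Real.rpow_add hs]; ring_nf
    have hsb0 : (0:ℝ) ≤ s^b := Real.rpow_nonneg hs.le _
    have hsa0 : (0:ℝ) ≤ s^a := Real.rpow_nonneg hs.le _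
    have hbr' := mul_le_mul_of_nonneg_right hbr (mul_nonneg hsb0 hsa0)
    calc ((1+s/2)^c * s^b) * (s^a / a) = ((1+s/2)^c * (s^b * s^a)) / a := by ring
      _ ≤ (2^(b+1) * (1+s)^(-b-1) * (s^b * s^a)) / a := by
          refine (div_le_div_iff_of_pos_right ha).2 ?_
          nlinarith
      _ = (1/a) * (2^(b+1) * (s^(a+b) * (1+s)^(-b-1))) := by rw [← hsab]; ring
  calc (∫ lam in Set.Ioc (0:ℝ) s,
      lam ^ b * (1 + |lam|) ^ c * (s - lam) ^ (a - 1))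
      ≤ K1 * s^(a-1) * Jp + ((1+s/2)^c * s^b) * (s^a / a) := by
        rw [← hval]; exact step1
    _ ≤ K1 * ((1/(b+1)+J) * (2^(b+1) * (s^(a+b) * (1+s)^(-b-1))))
        + (1/a) * (2^(b+1) * (s^(a+b) * (1+s)^(-b-1))) := by
        have := mul_le_mul_of_nonneg_left claimA hK1pos.le
        nlinarith [this, claimB]
    _ = 2 ^ (b+1) * (K1 * (1/(b+1) + J) + 1/a) * s^(a+b) * (1+s)^(-b-1) := by ring
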